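/- Let Π_t be the orthogonal projection onto the span of the eigenvectors of tρ − σ with nonnegative eigenvalues, where ρ = Σ_i λ_i |x_i⟩⟨x_i| and σ = Σ_j μ_j |y_j⟩⟨y_j| are density matrices on ℂ^d with orthonormal eigenbases. Then for every α ∈ [0,1], every t' ≥ 0 and every δ ≥ 0, with t = δ·t', the optimal type-II error satisfies β_α(ρ,σ) ≥ Σ_{i,j} min(t'·λ_i, μ_j)·( |⟨x_i| Π_t |y_j⟩|² + δ·|⟨x_i| (I − Π_t) |y_j⟩|² ) − δ·t'·α. -/

import Mathlib

open Matrix BigOperators ComplexOrder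

noncomputable section

/-- The optimal quantum type-II error trade-off. -/
def qBeta {d : ℕ} (α : ℝ) (ρ σ : Matrix (Fin d) (Fin d) ℂ) : ℝ :=
  sInf { b : ℝ | ∃ T : Matrix (Fin d) (Fin d) ℂ,
    T.PosSemidef ∧ (1 - T).PosSemidef ∧ ((T * ρ).trace.re ≤ α) ∧
    b = 1 - (T * σ).trace.re }

/-- The orthogonal projection onto the span of the eigenvectors of a Hermitian
matrix `A` with nonnegative eigenvalues (defined as `0` if `A` is not Hermitian). -/
def nonnegProj {d : ℕ} (A : Matrix (Fin d) (Fin d) ℂ) : Matrix (Fin d) (Fin d) ℂ :=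
  if hA : A.IsHermitian then
    (hA.eigenvectorUnitary : Matrix (Fin d) (Fin d) ℂ) *
      Matrix.diagonal (fun i => if 0 ≤ hA.eigenvalues i then (1 : ℂ) else 0) *
      star (hA.eigenvectorUnitary : Matrix (Fin d) (Fin d) ℂ)
  else 0

section helpers
variable {d : ℕ}

lemma dot_re_sum (w : Fin d → ℂ) : (star w ⬝ᵥ w).re = ∑ i, Complex.normSq (w i) := by
  simp [dotProduct, Complex.re_sum, Complex.normSq_eq_conj_mul_self, Pi.star_apply,
    Complex.mul_re]
  rfl

lemma trace_mul_vecMulVec (M : Matrix (Fin d) (Fin d) ℂ) (v : Fin d → ℂ) :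
    (M * vecMulVec v (star v)).trace = star v ⬝ᵥ (M *ᵥ v) := by
  simp only [Matrix.trace, Matrix.diag, Matrix.mul_apply, vecMulVec_apply, dotProduct,
    mulVec, Pi.star_apply, Finset.mul_sum]
  congr 1; ext a; congr 1; ext b; ring

lemma conj_dot (C : Matrix (Fin d) (Fin d) ℂ) (u v : Fin d → ℂ) :
    (starRingEnd ℂ) (star u ⬝ᵥ (C *ᵥ v)) = star v ⬝ᵥ (Cᴴ *ᵥ u) := by
  simp only [dotProduct, mulVec, map_sum, _root_.map_mul, Pi.star_apply, conjTranspose_apply,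
    dotProduct, RingHom.map_mul, Complex.conj_conj, Finset.mul_sum]
  rw [Finset.sum_comm]
  congr 1; ext a; congr 1; ext b
  simp [mul_comm, mul_left_comm]

lemma parseval (x : Fin d → Fin d → ℂ)
    (hx : ∀ i j, star (x i) ⬝ᵥ x j = if i = j then 1 else 0) (w : Fin d → ℂ) :
    ∑ i, Complex.normSq (star (x i) ⬝ᵥ w) = (star w ⬝ᵥ w).re := by
  set B : Matrix (Fin d) (Fin d) ℂ := Matrix.of (fun i k => (starRingEnd ℂ) (x i k)) with hB
  have hBB : B * Bᴴ = 1 := by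
    ext i j
    simpa [hB, Matrix.mul_apply, conjTranspose_apply, dotProduct, Matrix.one_apply]
      using hx i j
  have hBB' : Bᴴ * B = 1 := mul_eq_one_comm.mp hBB
  have hw : ∀ i, star (x i) ⬝ᵥ w = (B *ᵥ w) i := by
    intro i; simp [hB, mulVec, dotProduct]
  calc ∑ i, Complex.normSq (star (x i) ⬝ᵥ w) = ∑ i, Complex.normSq ((B *ᵥ w) i) := by
        simp [hw]
    _ = (star (B *ᵥ w) ⬝ᵥ (B *ᵥ w)).re := (dot_re_sum _).symm
    _ = (star w ⬝ᵥ w).re := by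
        rw [star_mulVec, ← dotProduct_mulVec, mulVec_mulVec, hBB', one_mulVec]

lemma nonnegProj_def {A : Matrix (Fin d) (Fin d) ℂ} (hA : A.IsHermitian) :
    nonnegProj A = (hA.eigenvectorUnitary : Matrix (Fin d) (Fin d) ℂ) *
      Matrix.diagonal (fun i => if 0 ≤ hA.eigenvalues i then (1 : ℂ) else 0) *
      (hA.eigenvectorUnitary : Matrix (Fin d) (Fin d) ℂ)ᴴ := by
  rw [nonnegProj, dif_pos hA, Matrix.star_eq_conjTranspose]

lemma nonnegProj_isHermitian {A : Matrix (Fin d) (Fin d) ℂ} (hA : A.IsHermitian) :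
    (nonnegProj A).IsHermitian := by
  rw [nonnegProj_def hA]
  have hst : (star fun i => if 0 ≤ hA.eigenvalues i then (1 : ℂ) else 0)
      = (fun i => if 0 ≤ hA.eigenvalues i then (1 : ℂ) else 0) := by
    funext i; by_cases h : 0 ≤ hA.eigenvalues i <;> simp [h]
  unfold Matrix.IsHermitian
  simp only [conjTranspose_mul, conjTranspose_conjTranspose, diagonal_conjTranspose, hst,
    Matrix.mul_assoc]

lemma nonnegProj_idem {A : Matrix (Fin d) (Fin d) ℂ} (hA : A.IsHermitian) :
    nonnegProj A * nonnegProj A = nonnegProj A := by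
  set U := (hA.eigenvectorUnitary : Matrix (Fin d) (Fin d) ℂ) with hU
  have hUU : Uᴴ * U = 1 := by
    rw [← Matrix.star_eq_conjTranspose]
    exact Unitary.coe_star_mul_self hA.eigenvectorUnitary
  rw [nonnegProj_def hA, ← hU]
  have : ∀ B C : Matrix (Fin d) (Fin d) ℂ, (U * B * Uᴴ) * (U * C * Uᴴ) = U * (B * C) * Uᴴ := by
    intro B C
    calc (U * B * Uᴴ) * (U * C * Uᴴ) = U * B * (Uᴴ * U) * C * Uᴴ := by
          simp only [Matrix.mul_assoc]
      _ = U * (B * C) * Uᴴ := by rw [hUU]; simp only [Matrix.mul_mul_apply, Matrix.mul_one,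
          Matrix.mul_assoc]
  rw [this, diagonal_mul_diagonal]
  have hff : (fun i => (if 0 ≤ hA.eigenvalues i then (1 : ℂ) else 0) *
      if 0 ≤ hA.eigenvalues i then (1 : ℂ) else 0)
      = fun i => if 0 ≤ hA.eigenvalues i then (1 : ℂ) else 0 := by
    funext i; by_cases h : 0 ≤ hA.eigenvalues i <;> simp [h]
  rw [hff]

lemma key_trace_le (A : Matrix (Fin d) (Fin d) ℂ) (hA : A.IsHermitian)
    (Q : Matrix (Fin d) (Fin d) ℂ) (hQ : Q.PosSemidef) (hQ1 : (1 - Q).PosSemidef) :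
    (Q * A).trace.re ≤ (nonnegProj A * A).trace.re := by
  set U := (hA.eigenvectorUnitary : Matrix (Fin d) (Fin d) ℂ) with hUdef
  have hUU : Uᴴ * U = 1 := by
    rw [← Matrix.star_eq_conjTranspose]
    exact Unitary.coe_star_mul_self hA.eigenvectorUnitary
  have hUU' : U * Uᴴ = 1 := mul_eq_one_comm.mp hUU
  set E : Matrix (Fin d) (Fin d) ℂ :=
    Matrix.diagonal (RCLike.ofReal ∘ hA.eigenvalues) with hEdef
  have hspec : A = U * E * Uᴴ := by
    rw [hEdef, hUdef, ← Matrix.star_eq_conjTranspose]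
    exact hA.spectral_theorem
  set M : Matrix (Fin d) (Fin d) ℂ := Uᴴ * Q * U with hMdef
  have hM : M.PosSemidef := hQ.conjTranspose_mul_mul_same U
  have hM1 : (1 - M).PosSemidef := by
    have : (1 : Matrix (Fin d) (Fin d) ℂ) - M = Uᴴ * (1 - Q) * U := by
      rw [hMdef, Matrix.mul_sub, Matrix.mul_one, Matrix.sub_mul, hUU]
    rw [this]
    exact hQ1.conjTranspose_mul_mul_same U
  -- diagonal entries of M
  have hdiag : ∀ k, 0 ≤ (M k k).re ∧ (M k k).re ≤ 1 := by
    intro k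
    have h1 : (0 : ℂ) ≤ star (Pi.single k 1) ⬝ᵥ (M *ᵥ Pi.single k 1) := hM.dotProduct_mulVec_nonneg _
    have h2 : (0 : ℂ) ≤ star (Pi.single k 1) ⬝ᵥ ((1 - M) *ᵥ Pi.single k 1) := hM1.dotProduct_mulVec_nonneg _
    have hstar : star (Pi.single k 1 : Fin d → ℂ) = Pi.single k 1 := by
      funext a; by_cases h : a = k <;> simp [h, Pi.single_apply]
    have e1 : star (Pi.single k 1 : Fin d → ℂ) ⬝ᵥ (M *ᵥ Pi.single k 1) = M k k := by
      simp [hstar, dotProduct, mulVec, Pi.single_apply]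
    have e2 : star (Pi.single k 1 : Fin d → ℂ) ⬝ᵥ ((1 - M) *ᵥ Pi.single k 1) = 1 - M k k := by
      simp [hstar, dotProduct, mulVec, Pi.single_apply, Matrix.sub_apply, Matrix.one_apply]
    rw [e1] at h1; rw [e2] at h2
    constructor
    · exact (Complex.le_def.mp h1).1
    · have := (Complex.le_def.mp h2).1
      simp only [Complex.zero_re, Complex.sub_re, Complex.one_re] at this
      linarith
  -- trace computations
  have htr : ∀ R : Matrix (Fin d) (Fin d) ℂ, (R * A).trace = ∑ k, (Uᴴ * R * U) k k *
      (hA.eigenvalues k : ℂ) := by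
    intro R
    conv_lhs => rw [hspec]
    have h1 : R * (U * E * Uᴴ) = (R * U * E) * Uᴴ := by simp only [Matrix.mul_assoc]
    rw [h1, Matrix.trace_mul_comm]
    have h2 : Uᴴ * (R * U * E) = (Uᴴ * R * U) * E := by simp only [Matrix.mul_assoc]
    rw [h2, hEdef]
    simp [Matrix.trace, Matrix.mul_diagonal, Function.comp, RCLike.ofReal]
  have hQA : (Q * A).trace.re = ∑ k, (M k k).re * hA.eigenvalues k := by
    rw [htr Q, ← hMdef, Complex.re_sum]
    congr 1; ext k
    simp [Complex.mul_re]
  have hPA : (nonnegProj A * A).trace.re =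
      ∑ k, (if 0 ≤ hA.eigenvalues k then hA.eigenvalues k else 0) := by
    rw [htr (nonnegProj A)]
    have : Uᴴ * nonnegProj A * U = Matrix.diagonal
        (fun i => if 0 ≤ hA.eigenvalues i then (1 : ℂ) else 0) := by
      rw [nonnegProj_def hA, ← hUdef]
      calc Uᴴ * (U * Matrix.diagonal (fun i => if 0 ≤ hA.eigenvalues i then (1 : ℂ) else 0) * Uᴴ) * U
          = (Uᴴ * U) * Matrix.diagonal (fun i => if 0 ≤ hA.eigenvalues i then (1 : ℂ) else 0) * (Uᴴ * U) := by
            simp only [Matrix.mul_assoc]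
        _ = _ := by rw [hUU, Matrix.one_mul, Matrix.mul_one]
    rw [this, Complex.re_sum]
    congr 1; ext k
    by_cases h : 0 ≤ hA.eigenvalues k <;> simp [h, Matrix.diagonal_apply_eq]
  rw [hQA, hPA]
  apply Finset.sum_le_sum
  intro k _
  obtain ⟨h0, h1⟩ := hdiag k
  by_cases h : 0 ≤ hA.eigenvalues k
  · simp only [h, if_true]
    nlinarith
  · simp only [h, if_false]
    push_neg at h
    nlinarith

end helpers

/-- Inequality (12): for `t = δ·t'`,
`β_α(ρ,σ) ≥ Σ_{i,j} min(t'λ_i, μ_j)(|⟨x_i|Π_t|y_j⟩|² + δ|⟨x_i|(I−Π_t)|y_j⟩|²) − δt'α`. -/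
theorem lower_bound_min_form {d : ℕ} (ρ σ : Matrix (Fin d) (Fin d) ℂ)
    (hρ : ρ.PosSemidef) (hρtr : ρ.trace = 1)
    (hσ : σ.PosSemidef) (hσtr : σ.trace = 1)
    (lam mu : Fin d → ℝ) (x y : Fin d → (Fin d → ℂ))
    (hx : ∀ i j, star (x i) ⬝ᵥ x j = if i = j then 1 else 0)
    (hy : ∀ i j, star (y i) ⬝ᵥ y j = if i = j then 1 else 0)
    (hρdec : ρ = ∑ i, (lam i : ℂ) • vecMulVec (x i) (star (x i)))
    (hσdec : σ = ∑ j, (mu j : ℂ) • vecMulVec (y j) (star (y j)))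
    (α : ℝ) (hα : α ∈ Set.Icc (0 : ℝ) 1)
    (t' δ t : ℝ) (ht' : 0 ≤ t') (hδ : 0 ≤ δ) (ht : t = δ * t') :
    (∑ i, ∑ j, min (t' * lam i) (mu j) *
        (Complex.normSq (star (x i) ⬝ᵥ (nonnegProj (t • ρ - σ) *ᵥ y j))
          + δ * Complex.normSq (star (x i) ⬝ᵥ ((1 - nonnegProj (t • ρ - σ)) *ᵥ y j))))
      - δ * t' * α ≤ qBeta α ρ σ := by
  have htnn : 0 ≤ t := ht ▸ mul_nonneg hδ ht'
  have hρH := hρ.isHermitian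
  have hσH := hσ.isHermitian
  have hAH : (t • ρ - σ).IsHermitian := by
    apply Matrix.IsHermitian.sub _ hσH
    unfold Matrix.IsHermitian
    rw [Matrix.conjTranspose_smul, star_trivial, hρH.eq]
  set A := t • ρ - σ with hAdef
  set P := nonnegProj A with hPdef
  have hPH : P.IsHermitian := nonnegProj_isHermitian hAH
  have hPP : P * P = P := nonnegProj_idem hAH
  set C := (1 : Matrix (Fin d) (Fin d) ℂ) - P with hCdef
  have hCH : C.IsHermitian := Matrix.isHermitian_one.sub hPH
  have hCC : C * C = C := by
    rw [hCdef, Matrix.sub_mul, Matrix.one_mul, Matrix.mul_sub, Matrix.mul_one, hPP]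
    abel
  -- ∑_i |⟨x_i, P y_j⟩|² = ⟨y_j, P y_j⟩.re
  have hPval : ∀ j, ∑ i, Complex.normSq (star (x i) ⬝ᵥ (P *ᵥ y j))
      = (star (y j) ⬝ᵥ (P *ᵥ y j)).re := by
    intro j
    rw [parseval x hx (P *ᵥ y j), star_mulVec, ← dotProduct_mulVec, mulVec_mulVec,
      hPH.eq, hPP]
  -- ∑_j |⟨x_i, C y_j⟩|² = ⟨x_i, C x_i⟩.re
  have hCval : ∀ i, ∑ j, Complex.normSq (star (x i) ⬝ᵥ (C *ᵥ y j))
      = (star (x i) ⬝ᵥ (C *ᵥ x i)).re := by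
    intro i
    have h1 : ∀ j, Complex.normSq (star (x i) ⬝ᵥ (C *ᵥ y j))
        = Complex.normSq (star (y j) ⬝ᵥ (C *ᵥ x i)) := by
      intro j
      rw [← Complex.normSq_conj, conj_dot, hCH.eq]
    simp_rw [h1]
    rw [parseval y hy (C *ᵥ x i), star_mulVec, ← dotProduct_mulVec, mulVec_mulVec,
      hCH.eq, hCC]
  -- trace identities
  have htrP : (P * σ).trace.re = ∑ j, mu j * (star (y j) ⬝ᵥ (P *ᵥ y j)).re := by
    conv_lhs => rw [hσdec]
    rw [Matrix.mul_sum, Matrix.trace_sum, Complex.re_sum]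
    congr 1; ext j
    rw [Matrix.mul_smul, Matrix.trace_smul, trace_mul_vecMulVec, smul_eq_mul,
      Complex.re_ofReal_mul]
  have htrC : (C * ρ).trace.re = ∑ i, lam i * (star (x i) ⬝ᵥ (C *ᵥ x i)).re := by
    conv_lhs => rw [hρdec]
    rw [Matrix.mul_sum, Matrix.trace_sum, Complex.re_sum]
    congr 1; ext i
    rw [Matrix.mul_smul, Matrix.trace_smul, trace_mul_vecMulVec, smul_eq_mul,
      Complex.re_ofReal_mul]
  -- bound the LHS double sum
  have hbound : (∑ i, ∑ j, min (t' * lam i) (mu j) *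
        (Complex.normSq (star (x i) ⬝ᵥ (P *ᵥ y j))
          + δ * Complex.normSq (star (x i) ⬝ᵥ (C *ᵥ y j))))
      ≤ (P * σ).trace.re + t * (C * ρ).trace.re := by
    have step : (∑ i, ∑ j, min (t' * lam i) (mu j) *
          (Complex.normSq (star (x i) ⬝ᵥ (P *ᵥ y j))
            + δ * Complex.normSq (star (x i) ⬝ᵥ (C *ᵥ y j))))
        ≤ ∑ i, ∑ j, (mu j * Complex.normSq (star (x i) ⬝ᵥ (P *ᵥ y j))
            + (t' * lam i) * (δ * Complex.normSq (star (x i) ⬝ᵥ (C *ᵥ y j)))) := by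
      apply Finset.sum_le_sum; intro i _
      apply Finset.sum_le_sum; intro j _
      have ha : 0 ≤ Complex.normSq (star (x i) ⬝ᵥ (P *ᵥ y j)) := Complex.normSq_nonneg _
      have hb : 0 ≤ δ * Complex.normSq (star (x i) ⬝ᵥ (C *ᵥ y j)) :=
        mul_nonneg hδ (Complex.normSq_nonneg _)
      have h1 : min (t' * lam i) (mu j) ≤ mu j := min_le_right _ _
      have h2 : min (t' * lam i) (mu j) ≤ t' * lam i := min_le_left _ _
      nlinarith
    refine step.trans ?_
    simp only [Finset.sum_add_distrib]
    apply le_of_eq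
    congr 1
    · rw [Finset.sum_comm, htrP]
      refine Finset.sum_congr rfl fun j _ => ?_
      rw [← hPval j, Finset.mul_sum]
    · rw [htrC, ht, Finset.mul_sum]
      refine Finset.sum_congr rfl fun i _ => ?_
      rw [← hCval i, Finset.mul_sum, Finset.mul_sum]
      refine Finset.sum_congr rfl fun j _ => ?_
      ring
  -- now bound qBeta from below
  rw [qBeta]
  apply le_csInf
  · refine ⟨1, 0, Matrix.PosSemidef.zero, by simpa using Matrix.PosDef.one.posSemidef, ?_, by simp⟩
    simpa using hα.1
  rintro b ⟨T, hT, hT1, hTα, rfl⟩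
  set Q := (1 : Matrix (Fin d) (Fin d) ℂ) - T with hQdef
  have h1Q : (1 - Q).PosSemidef := by
    have : (1 : Matrix (Fin d) (Fin d) ℂ) - Q = T := by rw [hQdef]; abel
    rw [this]; exact hT
  have hkey := key_trace_le A hAH Q hT1 h1Q
  -- expand traces of products with A
  have htrA : ∀ R : Matrix (Fin d) (Fin d) ℂ,
      (R * A).trace.re = t * (R * ρ).trace.re - (R * σ).trace.re := by
    intro R
    rw [hAdef, Matrix.mul_sub, Matrix.trace_sub, Matrix.mul_smul, Matrix.trace_smul]
    simp [Complex.smul_re]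
  rw [htrA, htrA] at hkey
  have hQρ : (Q * ρ).trace.re = 1 - (T * ρ).trace.re := by
    rw [hQdef, Matrix.sub_mul, Matrix.one_mul, Matrix.trace_sub]
    simp [hρtr]
  have hQσ : (Q * σ).trace.re = 1 - (T * σ).trace.re := by
    rw [hQdef, Matrix.sub_mul, Matrix.one_mul, Matrix.trace_sub]
    simp [hσtr]
  have hCρ : (C * ρ).trace.re = 1 - (P * ρ).trace.re := by
    rw [hCdef, Matrix.sub_mul, Matrix.one_mul, Matrix.trace_sub]
    simp [hρtr]
  -- combine
  have hQρge : 1 - α ≤ (Q * ρ).trace.re := by rw [hQρ]; linarith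
  have main : (P * σ).trace.re + t * (C * ρ).trace.re - t * α ≤ 1 - (T * σ).trace.re := by
    rw [hCρ]
    have := mul_le_mul_of_nonneg_left hQρge htnn
    nlinarith [hkey, hQσ]
  calc (∑ i, ∑ j, min (t' * lam i) (mu j) *
        (Complex.normSq (star (x i) ⬝ᵥ (P *ᵥ y j))
          + δ * Complex.normSq (star (x i) ⬝ᵥ (C *ᵥ y j)))) - δ * t' * α
      ≤ (P * σ).trace.re + t * (C * ρ).trace.re - δ * t' * α := by linarith [hbound]
    _ = (P * σ).trace.re + t * (C * ρ).trace.re - t * α := by rw [ht]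
    _ ≤ 1 - (T * σ).trace.re := main
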